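/- Greedy monotone decomposition bound: if at each step one removes a maximum-length monotone (increasing or decreasing) subsequence from a sequence of distinct reals, then starting from length n the process terminates after at most 2⌈√n⌉ steps. -/

import Mathlib

open Function Finset

namespace GreedyAux

variable {α : Type*} [LinearOrder α]

/-- Erdős–Szekeres theorem (proof inlined from mathlib's Archive). -/
theorem erdos_szekeres {r s n : ℕ} {f : Fin n → α} (hn : r * s < n) (hf : Injective f) :
    (∃ t : Finset (Fin n), r < #t ∧ StrictMonoOn f ↑t) ∨
      ∃ t : Finset (Fin n), s < #t ∧ StrictAntiOn f ↑t := by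
  let inc_sequences_ending_in : Fin n → Finset (Finset (Fin n)) := fun i =>
    univ.powerset.filter fun t => Finset.max t = i ∧ StrictMonoOn f ↑t
  let dec_sequences_ending_in : Fin n → Finset (Finset (Fin n)) := fun i =>
    univ.powerset.filter fun t => Finset.max t = i ∧ StrictAntiOn f ↑t
  have inc_i : ∀ i, {i} ∈ inc_sequences_ending_in i := fun i => by
    simp [inc_sequences_ending_in, StrictMonoOn]
  have dec_i : ∀ i, {i} ∈ dec_sequences_ending_in i := fun i => by
    simp [dec_sequences_ending_in, StrictAntiOn]
  let ab' : Fin n → ℕ × ℕ := by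
    intro i
    apply
      (max' ((inc_sequences_ending_in i).image card) (Nonempty.image ⟨{i}, inc_i i⟩ _),
        max' ((dec_sequences_ending_in i).image card) (Nonempty.image ⟨{i}, dec_i i⟩ _))
  generalize hab : ab' = ab
  rsuffices ⟨i, hi⟩ : ∃ i, r < (ab i).1 ∨ s < (ab i).2
  · refine Or.imp ?_ ?_ hi
    on_goal 1 =>
      have : (ab i).1 ∈ image card (inc_sequences_ending_in i) := by
        simp only [← hab]; exact max'_mem _ (Nonempty.image ⟨{i}, inc_i i⟩ _)
    on_goal 2 =>
      have : (ab i).2 ∈ image card (dec_sequences_ending_in i) := by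
        simp only [← hab]; exact max'_mem _ (Nonempty.image ⟨{i}, dec_i i⟩ _)
    all_goals
      intro hi
      rw [mem_image] at this
      obtain ⟨t, ht₁, ht₂⟩ := this
      refine ⟨t, by rwa [ht₂], ?_⟩
      rw [mem_filter] at ht₁
      apply ht₁.2.2
  have : Injective ab := by
    simp only [← hab]
    apply Function.Injective.of_lt_imp_ne
    intro i j k q
    injection q with q₁ q₂
    cases lt_or_gt_of_ne fun _ => ne_of_lt ‹i < j› (hf ‹f i = f j›)
    on_goal 1 =>
      apply ne_of_lt _ q₁
      have : (ab' i).1 ∈ image card (inc_sequences_ending_in i) := by exact max'_mem _ (Nonempty.image ⟨{i}, inc_i i⟩ _)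
    on_goal 2 =>
      apply ne_of_lt _ q₂
      have : (ab' i).2 ∈ image card (dec_sequences_ending_in i) := by exact max'_mem _ (Nonempty.image ⟨{i}, dec_i i⟩ _)
    all_goals
      rw [Nat.lt_iff_add_one_le]
      apply le_max'
      rw [mem_image] at this ⊢
      rcases this with ⟨t, ht₁, ht₂⟩
      rw [mem_filter] at ht₁
      have : t.max = i := by simp only [ht₁.2.1]
      refine ⟨insert j t, ?_, ?_⟩
      · rw [mem_filter]
        refine ⟨?_, ?_, ?_⟩
        · rw [mem_powerset]; apply subset_univ
        · convert max_insert (a := j) (s := t)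
          rw [ht₁.2.1, max_eq_left]
          apply WithBot.coe_le_coe.mpr (le_of_lt ‹i < j›)
        simp only [StrictMonoOn, StrictAntiOn, coe_insert, Set.mem_insert_iff, mem_coe]
        rintro x ⟨rfl | _⟩ y ⟨rfl | _⟩ _
        · apply (irrefl _ ‹j < j›).elim
        · exfalso
          apply not_le_of_gt (_root_.trans ‹i < j› ‹j < y›) (le_max_of_eq ‹y ∈ t› ‹t.max = i›)
        · first
          | apply lt_of_le_of_lt _ ‹f i < f j›
          | apply lt_of_lt_of_le ‹f j < f i› _
          rcases lt_or_eq_of_le (le_max_of_eq ‹x ∈ t› ‹t.max = i›) with (_ | rfl)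
          · apply le_of_lt (ht₁.2.2 ‹x ∈ t› (mem_of_max ‹t.max = i›) ‹x < i›)
          · rfl
        · apply ht₁.2.2 ‹x ∈ t› ‹y ∈ t› ‹x < y›
      · rw [card_insert_of_notMem, ht₂]
        intro
        apply not_le_of_gt ‹i < j› (le_max_of_eq ‹j ∈ t› ‹t.max = i›)
  by_contra! q
  let ran : Finset (ℕ × ℕ) := (range r).image Nat.succ ×ˢ (range s).image Nat.succ
  have : image ab univ ⊆ ran := by
    rintro ⟨x₁, x₂⟩
    simp only [ran, mem_image, exists_prop, mem_range, mem_univ, mem_product, true_and,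
      Prod.ext_iff]
    rintro ⟨i, rfl, rfl⟩
    specialize q i
    have z : 1 ≤ (ab i).1 ∧ 1 ≤ (ab i).2 := by
      simp only [← hab]
      constructor <;>
        · apply le_max'
          rw [mem_image]
          exact ⟨{i}, by solve_by_elim, card_singleton i⟩
    exact ⟨⟨(ab i).1 - 1, by omega⟩, (ab i).2 - 1, by omega⟩
  apply not_le_of_gt hn
  simpa [ran, Nat.succ_injective, card_image_of_injective, ‹Injective ab›] using card_le_card this

lemma ceil_sqrt_mono {m₁ m : ℕ} (h : m₁ ≤ m) : ⌈Real.sqrt m₁⌉₊ ≤ ⌈Real.sqrt m⌉₊ :=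
  Nat.ceil_mono (Real.sqrt_le_sqrt (by exact_mod_cast h))

lemma lt_sq_ceil {t m : ℕ} (ht : 1 ≤ t) (h : (t - 1) * (t - 1) < m) :
    t ≤ ⌈Real.sqrt m⌉₊ := by
  have h2 : ((t - 1 : ℕ) : ℝ) < Real.sqrt m := by
    rw [Real.lt_sqrt (by positivity)]
    rw [sq]
    exact_mod_cast h
  have := Nat.lt_ceil.mpr h2
  omega

lemma ceil_sqrt_sq_lt {m : ℕ} (hm : 1 ≤ m) :
    (⌈Real.sqrt m⌉₊ - 1) * (⌈Real.sqrt m⌉₊ - 1) < m := by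
  set c := ⌈Real.sqrt m⌉₊ with hc
  have hc1 : 1 ≤ c := by
    rw [hc, Nat.one_le_ceil_iff]
    apply Real.sqrt_pos.mpr
    exact_mod_cast hm
  by_contra hcon
  push_neg at hcon
  have h1 : Real.sqrt m ≤ ((c - 1 : ℕ) : ℝ) := by
    have : (m : ℝ) ≤ ((c - 1 : ℕ) : ℝ) ^ 2 := by rw [sq]; exact_mod_cast hcon
    calc Real.sqrt m ≤ Real.sqrt (((c - 1 : ℕ) : ℝ) ^ 2) := Real.sqrt_le_sqrt this
      _ = ((c - 1 : ℕ) : ℝ) := Real.sqrt_sq (by positivity)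
  have := Nat.ceil_le.mpr h1
  omega

/-- The key two-step descent: removing at least `⌈√m⌉` elements twice drops
a quantity bounded by `t²` down to at most `(t-1)²`. -/
lemma descent {m₀ m₁ m₂ t : ℕ} (h0 : m₀ ≤ t * t)
    (h1 : m₁ ≤ m₀ - ⌈Real.sqrt m₀⌉₊) (h2 : m₂ ≤ m₁ - ⌈Real.sqrt m₁⌉₊) :
    m₂ ≤ (t - 1) * (t - 1) := by
  rcases Nat.eq_zero_or_pos t with rfl | ht
  · simp only [Nat.zero_sub, Nat.zero_mul] at h0 ⊢
    omega
  by_cases h : m₁ ≤ (t - 1) * (t - 1)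
  · exact le_trans (le_trans h2 (Nat.sub_le _ _)) h
  push_neg at h
  have hc1 : t ≤ ⌈Real.sqrt m₁⌉₊ := lt_sq_ceil ht h
  have hm10 : m₁ ≤ m₀ := le_trans h1 (Nat.sub_le _ _)
  have hc0 : t ≤ ⌈Real.sqrt m₀⌉₊ := le_trans hc1 (ceil_sqrt_mono hm10)
  have h1' : m₁ ≤ m₀ - t := le_trans h1 (Nat.sub_le_sub_left hc0 m₀)
  have h2' : m₂ ≤ m₁ - t := le_trans h2 (Nat.sub_le_sub_left hc1 m₁)
  obtain ⟨u, rfl⟩ : ∃ u, t = u + 1 := ⟨t - 1, by omega⟩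
  have hexp : (u + 1) * (u + 1) = u * u + 2 * u + 1 := by ring
  rw [hexp] at h0
  simp only [Nat.add_sub_cancel]
  set B := u * u
  omega

/-- Any nonempty set `S` of indices contains a monotone subset of size `≥ ⌈√|S|⌉`. -/
lemma exists_big_monotone {n : ℕ} (a : Fin n → ℝ) (ha : Injective a)
    (S : Finset (Fin n)) (hS : S.Nonempty) :
    ∃ M : Finset (Fin n), M ⊆ S ∧ (StrictMonoOn a ↑M ∨ StrictAntiOn a ↑M) ∧
      ⌈Real.sqrt S.card⌉₊ ≤ M.card := by
  have hm : 1 ≤ S.card := Finset.card_pos.mpr hS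
  set c := ⌈Real.sqrt S.card⌉₊ with hc
  let e := S.orderEmbOfFin (rfl : S.card = S.card)
  have hf : Injective (a ∘ e) := ha.comp e.injective
  have hn : (c - 1) * (c - 1) < S.card := ceil_sqrt_sq_lt hm
  rcases erdos_szekeres hn hf with ⟨t, htc, hmono⟩ | ⟨t, htc, hmono⟩ <;>
  · refine ⟨t.image e, ?_, ?_, ?_⟩
    · intro x hx
      rw [Finset.mem_image] at hx
      obtain ⟨i, _, rfl⟩ := hx
      exact S.orderEmbOfFin_mem rfl i
    · first
        | · left
            rw [Finset.coe_image]
            rintro x ⟨i, hi, rfl⟩ y ⟨j, hj, rfl⟩ hxy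
            exact hmono hi hj (e.lt_iff_lt.mp hxy)
        | · right
            rw [Finset.coe_image]
            rintro x ⟨i, hi, rfl⟩ y ⟨j, hj, rfl⟩ hxy
            exact hmono hi hj (e.lt_iff_lt.mp hxy)
    · rw [Finset.card_image_of_injective _ e.injective]
      omega

end GreedyAux

/-- Greedy monotone decomposition: repeatedly removing a maximum-length monotone
subsequence from a sequence of `n` distinct reals empties it in at most `2⌈√n⌉` steps. -/
theorem greedy_monotone_decomposition (n : ℕ) (a : Fin n → ℝ) (ha : Function.Injective a)
    (R : ℕ → Finset (Fin n)) (hR0 : R 0 = Finset.univ)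
    (hstep : ∀ i, (R i = ∅ → R (i + 1) = ∅) ∧
      (R i ≠ ∅ → ∃ M : Finset (Fin n), M ⊆ R i ∧
        (StrictMonoOn a ↑M ∨ StrictAntiOn a ↑M) ∧
        (∀ M' : Finset (Fin n), M' ⊆ R i →
          (StrictMonoOn a ↑M' ∨ StrictAntiOn a ↑M') → M'.card ≤ M.card) ∧
        R (i + 1) = R i \ M)) :
    R (2 * ⌈Real.sqrt n⌉₊) = ∅ := by
  set s := ⌈Real.sqrt n⌉₊ with hs
  -- Each step removes at least `⌈√(current size)⌉` elements.
  have hstep' : ∀ i, (R (i + 1)).card ≤ (R i).card - ⌈Real.sqrt ((R i).card)⌉₊ := by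
    intro i
    rcases hstep i with ⟨hemp, hne⟩
    by_cases h : R i = ∅
    · rw [hemp h]; simp
    · obtain ⟨M, hMsub, _, hMmax, hMeq⟩ := hne h
      obtain ⟨M', hM'sub, hM'mono, hM'card⟩ :=
        GreedyAux.exists_big_monotone a ha (R i) (Finset.nonempty_iff_ne_empty.mpr h)
      have hbig : ⌈Real.sqrt ((R i).card)⌉₊ ≤ M.card :=
        le_trans hM'card (hMmax M' hM'sub hM'mono)
      rw [hMeq, Finset.card_sdiff_of_subset hMsub]
      exact Nat.sub_le_sub_left hbig _
  -- The invariant: after `2k` steps, at most `(s-k)²` elements remain.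
  have inv : ∀ k, (R (2 * k)).card ≤ (s - k) * (s - k) := by
    intro k
    induction k with
    | zero =>
      have hcard : (R 0).card = n := by rw [hR0]; simp
      have h1 : Real.sqrt n ≤ (s : ℝ) := Nat.le_ceil _
      have h2 : (n : ℝ) ≤ (s : ℝ) * (s : ℝ) := by
        nlinarith [Real.sq_sqrt (show (0:ℝ) ≤ (n:ℝ) by positivity), Real.sqrt_nonneg (n:ℝ)]
      have : n ≤ s * s := by exact_mod_cast h2
      simpa [hcard] using this
    | succ k ih =>
      have e1 : 2 * (k + 1) = (2 * k + 1) + 1 := by ring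
      have h1 := hstep' (2 * k)
      have h2 := hstep' (2 * k + 1)
      rw [e1]
      have := GreedyAux.descent ih h1 h2
      have e2 : s - (k + 1) = (s - k) - 1 := by omega
      rw [e2]
      exact this
  have hfin := inv s
  rw [Nat.sub_self, Nat.zero_mul, Nat.le_zero] at hfin
  exact Finset.card_eq_zero.mp hfin
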